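/- Let k ≥ 0 and r > k be integers, let x_a < x_b, and let v = (v^0, v^a, v^b) be a weak function on [x_a, x_b] whose interior component v^0 is a polynomial of degree at most k. Then the discrete weak derivative d_{w,r}v is identically zero if and only if v is constant on [x_a, x_b], i.e., v^0 is the constant polynomial with value v^a and v^a = v^b. -/

import Mathlib

open MeasureTheory Set

noncomputable section

/-- `p` is the discrete weak derivative of order `r` of the weak function
`(v0, vl, vr)` on the interval `(c, d)`: it is a polynomial of degree at most `r`
satisfying `∫ p q = -∫ v0 q' + vr q(d) - vl q(c)` for all polynomials `q` of
degree at most `r`. -/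
def IsWeakDeriv (r : ℕ) (c d : ℝ) (v0 : ℝ → ℝ) (vl vr : ℝ) (p : Polynomial ℝ) : Prop :=
  p.degree ≤ (r : WithBot ℕ) ∧ ∀ q : Polynomial ℝ, q.degree ≤ (r : WithBot ℕ) →
    (∫ t in c..d, p.eval t * q.eval t) =
      -(∫ t in c..d, v0 t * q.derivative.eval t) + vr * q.eval d - vl * q.eval c

/-- `p` is the L²(c,d)-orthogonal projection of `g` onto polynomials of degree at most `l`. -/
def IsL2Proj (l : ℕ) (c d : ℝ) (g : ℝ → ℝ) (p : Polynomial ℝ) : Prop :=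
  p.degree ≤ (l : WithBot ℕ) ∧ ∀ q : Polynomial ℝ, q.degree ≤ (l : WithBot ℕ) →
    (∫ t in c..d, (g t - p.eval t) * q.eval t) = 0


lemma poly_intervalIntegrable (a b : ℝ) (P : Polynomial ℝ) :
    IntervalIntegrable (fun t => P.eval t) volume a b :=
  P.continuous.intervalIntegrable a b

lemma poly_integral_deriv (a b : ℝ) (P : Polynomial ℝ) :
    ∫ t in a..b, P.derivative.eval t = P.eval b - P.eval a := by
  refine intervalIntegral.integral_eq_sub_of_hasDerivAt (fun x _ => P.hasDerivAt x) ?_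
  exact poly_intervalIntegrable a b _

lemma poly_parts (a b : ℝ) (u q : Polynomial ℝ) :
    ∫ t in a..b, u.eval t * q.derivative.eval t =
      u.eval b * q.eval b - u.eval a * q.eval a
        - ∫ t in a..b, u.derivative.eval t * q.eval t := by
  have h := poly_integral_deriv a b (u * q)
  rw [Polynomial.derivative_mul] at h
  have h2 : ∫ t in a..b,
      (u.derivative.eval t * q.eval t + u.eval t * q.derivative.eval t) =
      u.eval b * q.eval b - u.eval a * q.eval a := by
    simpa [Polynomial.eval_add, Polynomial.eval_mul] using h
  rw [intervalIntegral.integral_add] at h2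
  · linarith
  · simpa [Polynomial.eval_mul] using poly_intervalIntegrable a b (u.derivative * q)
  · simpa [Polynomial.eval_mul] using poly_intervalIntegrable a b (u * q.derivative)

lemma poly_eq_zero_of_nonneg_integral_zero (a b : ℝ) (hab : a < b) (P : Polynomial ℝ)
    (hnn : ∀ t ∈ Set.Ioc a b, 0 ≤ P.eval t)
    (hz : (∫ t in a..b, P.eval t) = 0) : P = 0 := by
  by_contra hP
  have hfin : Set.Finite {x | P.IsRoot x} := Polynomial.finite_setOf_isRoot hP
  have hae : (fun t => P.eval t) =ᵐ[volume.restrict (Ioc a b)] 0 := by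
    rw [← intervalIntegral.integral_eq_zero_iff_of_le_of_nonneg_ae hab.le _
      (poly_intervalIntegrable a b P)]
    · exact hz
    · exact (ae_restrict_iff' measurableSet_Ioc).2 (ae_of_all _ hnn)
  have h1 : volume.restrict (Ioc a b) {t | P.eval t ≠ 0} = 0 := by
    have := hae
    rw [Filter.EventuallyEq, ae_iff] at this
    simpa using this
  have h2 : volume.restrict (Ioc a b) {t | P.eval t = 0} = 0 := by
    refine le_antisymm ?_ zero_le
    calc volume.restrict (Ioc a b) {t | P.eval t = 0}
        ≤ volume {t | P.eval t = 0} := Measure.restrict_le_self _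
      _ = 0 := hfin.measure_zero _
  have huniv : volume.restrict (Ioc a b) Set.univ = 0 := by
    refine le_antisymm ?_ zero_le
    have hsub : (Set.univ : Set ℝ) ⊆ {t | P.eval t ≠ 0} ∪ {t | P.eval t = 0} := by
      intro x _; by_cases hx : P.eval x = 0
      · exact Or.inr hx
      · exact Or.inl hx
    calc volume.restrict (Ioc a b) Set.univ
        ≤ volume.restrict (Ioc a b) ({t | P.eval t ≠ 0} ∪ {t | P.eval t = 0}) :=
          measure_mono hsub
      _ ≤ volume.restrict (Ioc a b) {t | P.eval t ≠ 0}
            + volume.restrict (Ioc a b) {t | P.eval t = 0} := measure_union_le _ _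
      _ = 0 := by rw [h1, h2, add_zero]
  rw [Measure.restrict_apply_univ, Real.volume_Ioc] at huniv
  simp [ENNReal.ofReal_eq_zero, sub_nonpos, not_le.mpr hab] at huniv

/-- Lemma 3.1. Let `k ≥ 0`, `r > k`, `x_a < x_b`, and let
`v = (v⁰, v_a, v_b)` be a weak function whose interior component `v⁰` is a polynomial of
degree at most `k`. Then the discrete weak derivative `d_{w,r} v` vanishes identically
if and only if `v` is constant on `[x_a, x_b]`, i.e. `v⁰` is the constant polynomial
with value `v_a` and `v_a = v_b`. -/
theorem discrete_weak_derivative_eq_zero_iff_const (k r : ℕ) (hkr : k < r)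
    (xa xb : ℝ) (hab : xa < xb)
    (v0 : Polynomial ℝ) (hdeg : v0.degree ≤ (k : WithBot ℕ)) (va vb : ℝ)
    (p : Polynomial ℝ) (hp : IsWeakDeriv r xa xb (fun t => v0.eval t) va vb p) :
    p = 0 ↔ v0 = Polynomial.C va ∧ va = vb := by
  obtain ⟨hpdeg, hpint⟩ := hp
  have hr1 : (1 : WithBot ℕ) ≤ (r : WithBot ℕ) := by
    exact_mod_cast Nat.one_le_cast.mpr (by omega : 1 ≤ r)
  constructor
  · intro hp0
    subst hp0
    -- key identity: for all q of degree ≤ r,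
    -- ∫ v0' q = (v0(xb) - vb) q(xb) - (v0(xa) - va) q(xa)
    have key : ∀ q : Polynomial ℝ, q.degree ≤ (r : WithBot ℕ) →
        (∫ t in xa..xb, v0.derivative.eval t * q.eval t)
          = (v0.eval xb - vb) * q.eval xb - (v0.eval xa - va) * q.eval xa := by
      intro q hq
      have h1 := hpint q hq
      simp only [Polynomial.eval_zero, zero_mul, intervalIntegral.integral_zero] at h1
      have h2 := poly_parts xa xb v0 q
      -- h1 : 0 = -(∫ v0 q') + vb q(xb) - va q(xa)
      linarith
    -- Step A: v0.derivative = 0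
    have hd0 : v0.derivative = 0 := by
      by_contra hd
      have hnk : v0.natDegree ≤ k := Polynomial.natDegree_le_iff_degree_le.mpr hdeg
      have hk1 : 1 ≤ v0.natDegree := by
        by_contra h
        have : v0.natDegree = 0 := by omega
        have := Polynomial.eq_C_of_natDegree_eq_zero this
        rw [this] at hd
        simp at hd
      set q : Polynomial ℝ :=
        (Polynomial.X - Polynomial.C xa) * (Polynomial.X - Polynomial.C xb) * v0.derivative
        with hqdef
      have hqdeg : q.degree ≤ (r : WithBot ℕ) := by
        apply Polynomial.degree_le_of_natDegree_le
        calc q.natDegree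
            ≤ ((Polynomial.X - Polynomial.C xa) * (Polynomial.X - Polynomial.C xb)).natDegree
              + v0.derivative.natDegree := Polynomial.natDegree_mul_le
          _ ≤ ((Polynomial.X - Polynomial.C xa).natDegree
              + (Polynomial.X - Polynomial.C xb).natDegree) + (v0.natDegree - 1) := by
              gcongr
              · exact Polynomial.natDegree_mul_le
              · exact Polynomial.natDegree_derivative_le v0
          _ ≤ r := by
              rw [Polynomial.natDegree_X_sub_C, Polynomial.natDegree_X_sub_C]
              omega
      have hqa : q.eval xa = 0 := by simp [hqdef]
      have hqb : q.eval xb = 0 := by simp [hqdef]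
      have hzero : (∫ t in xa..xb, v0.derivative.eval t * q.eval t) = 0 := by
        rw [key q hqdeg, hqa, hqb]; ring
      set P : Polynomial ℝ := -((Polynomial.X - Polynomial.C xa)
        * (Polynomial.X - Polynomial.C xb) * v0.derivative * v0.derivative) with hPdef
      have hPeval : ∀ t : ℝ, P.eval t = -(v0.derivative.eval t * q.eval t) := by
        intro t; simp [hPdef, hqdef]; ring
      have hPz : (∫ t in xa..xb, P.eval t) = 0 := by
        simp_rw [hPeval]
        rw [intervalIntegral.integral_neg, hzero, neg_zero]
      have hPnn : ∀ t ∈ Set.Ioc xa xb, 0 ≤ P.eval t := by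
        intro t ht
        have h1 : 0 < t - xa := by have := ht.1; linarith
        have h2 : t - xb ≤ 0 := by have := ht.2; linarith
        have : P.eval t = (-(t - xa) * (t - xb)) * (v0.derivative.eval t)^2 := by
          simp [hPdef]; ring
        rw [this]
        apply mul_nonneg _ (sq_nonneg _)
        nlinarith
      have hP0 := poly_eq_zero_of_nonneg_integral_zero xa xb hab P hPnn hPz
      rw [hPdef, neg_eq_zero] at hP0
      have hXa : (Polynomial.X - Polynomial.C xa : Polynomial ℝ) ≠ 0 :=
        Polynomial.X_sub_C_ne_zero xa
      have hXb : (Polynomial.X - Polynomial.C xb : Polynomial ℝ) ≠ 0 :=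
        Polynomial.X_sub_C_ne_zero xb
      rcases mul_eq_zero.mp hP0 with h | h
      · rcases mul_eq_zero.mp h with h' | h'
        · rcases mul_eq_zero.mp h' with h'' | h''
          · exact hXa h''
          · exact hXb h''
        · exact hd h'
      · exact hd h
    -- v0 is constant
    obtain ⟨c, hc⟩ : ∃ c, v0 = Polynomial.C c := by
      have := Polynomial.natDegree_eq_zero_of_derivative_eq_zero hd0
      exact ⟨v0.coeff 0, Polynomial.eq_C_of_natDegree_eq_zero this⟩
    -- evaluate key at q = X - C xa and q = X - C xb
    have hdeg1 : ∀ y : ℝ, (Polynomial.X - Polynomial.C y : Polynomial ℝ).degree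
        ≤ (r : WithBot ℕ) := by
      intro y; rw [Polynomial.degree_X_sub_C]; exact hr1
    have e1 := key (Polynomial.X - Polynomial.C xa) (hdeg1 xa)
    have e2 := key (Polynomial.X - Polynomial.C xb) (hdeg1 xb)
    rw [hd0] at e1 e2
    simp [hc] at e1 e2
    -- e1: 0 = (c - vb) * (xb - xa), e2: 0 = -((c - va) * (xa - xb))
    have hne : xb - xa ≠ 0 := by intro h; linarith
    have hvb : c = vb := by
      rcases e1 with h | h
      · linarith
      · exact absurd h hne
    have hva : c = va := by
      rcases e2 with h | h
      · linarith
      · exact absurd (by linarith : xb - xa = 0) hne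
    exact ⟨by rw [hc, hva], by rw [← hva, hvb]⟩
  · rintro ⟨hv0, hvab⟩
    subst hv0
    subst hvab
    have hz : ∀ q : Polynomial ℝ, q.degree ≤ (r : WithBot ℕ) →
        (∫ t in xa..xb, p.eval t * q.eval t) = 0 := by
      intro q hq
      have h1 := hpint q hq
      have h2 : (∫ t in xa..xb, (Polynomial.C va).eval t * q.derivative.eval t)
          = va * (q.eval xb - q.eval xa) := by
        simp only [Polynomial.eval_C]
        rw [intervalIntegral.integral_const_mul, poly_integral_deriv]
      rw [h2] at h1
      rw [h1]; ring
    have hsq := hz p hpdeg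
    have := poly_eq_zero_of_nonneg_integral_zero xa xb hab (p * p)
      (fun t _ => by simpa [Polynomial.eval_mul] using mul_self_nonneg (p.eval t))
      (by simpa [Polynomial.eval_mul] using hsq)
    exact mul_self_eq_zero.mp this
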